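/- Every annihilation function of [n]^d (a function F : [n]^d → ℤ such that the sum of F over every layer is zero) can be written as a finite sum of simple annihilation functions, equivalently as an integer linear combination of simple annihilation functions. -/

import Mathlib

/-- The integer indicator function of a point `P` of the cube `[n]^d`. -/
def indic {n d : ℕ} (P : Fin d → Fin n) : (Fin d → Fin n) → ℤ :=
  fun x => if x = P then 1 else 0

/-- A *simple annihilation function* is `1_P − 1_Q + 1_R − 1_S` where `P,Q,R,S` are the
consecutive vertices of a rectangle with sides parallel to two coordinate axes `i ≠ j`:
`Q = P` with coordinate `i` changed to `b ≠ P i`, `S = P` with coordinate `j` changed to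
`e ≠ P j`, and `R` has both changes. -/
def IsSimpleAnnihilation {n d : ℕ} (f : (Fin d → Fin n) → ℤ) : Prop :=
  ∃ (i j : Fin d) (P : Fin d → Fin n) (b e : Fin n),
    i ≠ j ∧ P i ≠ b ∧ P j ≠ e ∧
    f = fun x => indic P x - indic (Function.update P i b) x
        + indic (Function.update (Function.update P i b) j e) x
        - indic (Function.update P j e) x

namespace AnnihAux

variable {n d : ℕ}

def Spanned (F : (Fin d → Fin n) → ℤ) : Prop :=
  ∃ (k : ℕ) (s : Fin k → ((Fin d → Fin n) → ℤ)),
    (∀ t, IsSimpleAnnihilation (s t)) ∧ F = ∑ t, s t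

lemma spanned_zero : Spanned (0 : (Fin d → Fin n) → ℤ) :=
  ⟨0, Fin.elim0, fun t => t.elim0, by simp⟩

lemma spanned_add {F G : (Fin d → Fin n) → ℤ} (hF : Spanned F) (hG : Spanned G) :
    Spanned (F + G) := by
  obtain ⟨k1, s1, hs1, rfl⟩ := hF
  obtain ⟨k2, s2, hs2, rfl⟩ := hG
  refine ⟨k1 + k2, Fin.append s1 s2, ?_, ?_⟩
  · intro t
    refine Fin.addCases (motive := fun t => IsSimpleAnnihilation (Fin.append s1 s2 t)) ?_ ?_ t
    · intro i; rw [Fin.append_left]; exact hs1 i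
    · intro i; rw [Fin.append_right]; exact hs2 i
  · rw [Fin.sum_univ_add]
    simp [Fin.append_left, Fin.append_right]

lemma simple_neg {f : (Fin d → Fin n) → ℤ} (hf : IsSimpleAnnihilation f) :
    IsSimpleAnnihilation (-f) := by
  obtain ⟨i, j, P, b, e, hij, hb, he, rfl⟩ := hf
  refine ⟨i, j, Function.update P i b, P i, e, hij, ?_, ?_, ?_⟩
  · simp [Ne.symm hb]
  · rw [Function.update_of_ne (Ne.symm hij)]; exact he
  · have h1 : Function.update (Function.update P i b) i (P i) = P := by
      rw [Function.update_idem, Function.update_eq_self]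
    rw [h1]
    funext y
    simp only [Pi.neg_apply]
    ring

lemma spanned_zsmul {f : (Fin d → Fin n) → ℤ} (hf : IsSimpleAnnihilation f) (c : ℤ) :
    Spanned (c • f) := by
  refine ⟨c.natAbs, fun _ => if 0 ≤ c then f else -f, ?_, ?_⟩
  · intro t
    split
    · exact hf
    · exact simple_neg hf
  · rw [Finset.sum_const, Finset.card_univ, Fintype.card_fin]
    by_cases hc : 0 ≤ c
    · rw [if_pos hc, ← natCast_zsmul, Int.natAbs_of_nonneg hc]
    · have hcabs : (c.natAbs : ℤ) = -c := by omega
      rw [if_neg hc, smul_neg, ← natCast_zsmul, hcabs, neg_smul, neg_neg]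

lemma indic_layer (P : Fin d → Fin n) (l : Fin d) (m : Fin n) :
    ∑ x ∈ Finset.univ.filter (fun x : Fin d → Fin n => x l = m), indic P x
      = if P l = m then 1 else 0 := by
  unfold indic
  rw [Finset.sum_ite_eq']
  simp [Finset.mem_filter]

lemma simple_layer {f : (Fin d → Fin n) → ℤ} (hf : IsSimpleAnnihilation f)
    (l : Fin d) (m : Fin n) :
    ∑ x ∈ Finset.univ.filter (fun x : Fin d → Fin n => x l = m), f x = 0 := by
  obtain ⟨i, j, P, b, e, hij, hb, he, rfl⟩ := hf
  simp only [Finset.sum_sub_distrib, Finset.sum_add_distrib, indic_layer,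
    Function.update_apply]
  by_cases hli : l = i <;> by_cases hlj : l = j
  · exact absurd (hli ▸ hlj ▸ rfl : i = j) hij
  · simp [hli, hlj, hij]
  · simp [hli, hlj, Ne.symm hij]
  · simp [hli, hlj]

def ksupp (z0 : Fin n) (x : Fin d → Fin n) : ℕ :=
  (Finset.univ.filter fun l => x l ≠ z0).card

def mu (z0 : Fin n) (F : (Fin d → Fin n) → ℤ) : ℕ :=
  ∑ y : Fin d → Fin n, (F y).natAbs * 4 ^ ksupp z0 y

lemma filter_update (z0 : Fin n) (x : Fin d → Fin n) (i : Fin d) :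
    (Finset.univ.filter fun l => Function.update x i z0 l ≠ z0)
      = (Finset.univ.filter fun l => x l ≠ z0).erase i := by
  ext l
  by_cases h : l = i <;> simp [h, Function.update_apply, Finset.mem_erase]

lemma main (z0 : Fin n) (hd : 0 < d) :
    ∀ m (F : (Fin d → Fin n) → ℤ),
      mu z0 F ≤ m →
      (∀ (i : Fin d) (j : Fin n),
        ∑ x ∈ Finset.univ.filter (fun x : Fin d → Fin n => x i = j), F x = 0) →
      Spanned F := by
  intro m
  induction m with
  | zero =>
    intro F hm _
    have hF0 : F = 0 := by
      funext y
      have h := Finset.sum_eq_zero_iff.mp (Nat.le_zero.mp hm) y (Finset.mem_univ y)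
      have h4 : 0 < 4 ^ ksupp z0 y := by positivity
      have : (F y).natAbs = 0 := by
        rcases Nat.mul_eq_zero.mp h with h' | h'
        · exact h'
        · omega
      simpa using Int.natAbs_eq_zero.mp this
    rw [hF0]; exact spanned_zero
  | succ m ih =>
    intro F hm hF
    by_cases hsupp : ∀ y, F y ≠ 0 → ksupp z0 y ≤ 1
    · -- base case: F must be 0
      have h1 : ∀ y, ksupp z0 y = 1 → F y = 0 := by
        intro y hy
        obtain ⟨i, hi⟩ := Finset.card_eq_one.mp hy
        have hyi : y i ≠ z0 := by
          have : i ∈ Finset.univ.filter fun l => y l ≠ z0 := by rw [hi]; simp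
          simpa using this
        have hkey := hF i (y i)
        rw [Finset.sum_eq_single_of_mem y (by simp)] at hkey
        · exact hkey
        · intro z hz hzy
          by_contra hFz
          have hz1 : ksupp z0 z ≤ 1 := hsupp z hFz
          have hzi : z i = y i := (Finset.mem_filter.mp hz).2
          have hizS : i ∈ Finset.univ.filter fun l => z l ≠ z0 := by
            simp [hzi, hyi]
          have hcard : (Finset.univ.filter fun l => z l ≠ z0) = {i} :=
            (Finset.eq_of_subset_of_card_le (Finset.singleton_subset_iff.mpr hizS)
              (by rw [Finset.card_singleton]; exact hz1)).symm
          apply hzy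
          funext l
          by_cases hl : l = i
          · rw [hl, hzi]
          · have hzl : z l = z0 := by
              by_contra h
              have : l ∈ ({i} : Finset (Fin d)) := by rw [← hcard]; simp [h]
              simp at this; exact hl this
            have hyl : y l = z0 := by
              by_contra h
              have : l ∈ ({i} : Finset (Fin d)) := by rw [← hi]; simp [h]
              simp at this; exact hl this
            rw [hzl, hyl]
      have h0 : ∀ y, ksupp z0 y = 0 → F y = 0 := by
        intro y hy
        have hyall : ∀ l, y l = z0 := by
          intro l; by_contra h
          have : l ∈ Finset.univ.filter fun l => y l ≠ z0 := by simp [h]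
          rw [Finset.card_eq_zero.mp hy] at this
          simp at this
        set i0 : Fin d := ⟨0, hd⟩
        have hkey := hF i0 z0
        rw [Finset.sum_eq_single_of_mem y (by simp [hyall])] at hkey
        · exact hkey
        · intro z hz hzy
          by_contra hFz
          have hz1 : ksupp z0 z ≤ 1 := hsupp z hFz
          rcases Nat.le_one_iff_eq_zero_or_eq_one.mp hz1 with h | h
          · apply hzy
            funext l
            have hzl : z l = z0 := by
              by_contra hc
              have : l ∈ Finset.univ.filter fun l => z l ≠ z0 := by simp [hc]
              rw [Finset.card_eq_zero.mp h] at this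
              simp at this
            rw [hzl, hyall l]
          · exact hFz (h1 z h)
      have hF0 : F = 0 := by
        funext y
        rcases Nat.lt_or_ge 1 (ksupp z0 y) with h | h
        · by_contra hFy
          have := hsupp y hFy
          omega
        · rcases Nat.le_one_iff_eq_zero_or_eq_one.mp h with h | h
          · exact h0 y h
          · exact h1 y h
      rw [hF0]; exact spanned_zero
    · push_neg at hsupp
      obtain ⟨x, hFX, hkx⟩ := hsupp
      obtain ⟨i, hi, j, hj, hij⟩ := Finset.one_lt_card.mp (hkx : 1 < ksupp z0 x)
      have hxi : x i ≠ z0 := (Finset.mem_filter.mp hi).2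
      have hxj : x j ≠ z0 := (Finset.mem_filter.mp hj).2
      set A := Function.update x i z0 with hA
      set B := Function.update x j z0 with hB
      set C := Function.update A j z0 with hC
      set R : (Fin d → Fin n) → ℤ :=
        fun y => indic x y - indic A y + indic C y - indic B y with hRdef
      have hR : IsSimpleAnnihilation R := ⟨i, j, x, z0, z0, hij, hxi, hxj, rfl⟩
      have hAi : A i = z0 := by rw [hA]; simp
      have hAj : A j = x j := by rw [hA]; exact Function.update_of_ne (Ne.symm hij) _ _
      have hBi : B i = x i := by rw [hB]; exact Function.update_of_ne hij _ _
      have hBj : B j = z0 := by rw [hB]; simp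
      have hCi : C i = z0 := by
        rw [hC]; rw [Function.update_of_ne hij _ _]; exact hAi
      have hCj : C j = z0 := by rw [hC]; simp
      have hxA : x ≠ A := fun h => hxi (by rw [← hAi, ← h])
      have hxB : x ≠ B := fun h => hxj (by rw [← hBj, ← h])
      have hxC : x ≠ C := fun h => hxi (by rw [← hCi, ← h])
      have hAB : A ≠ B := fun h => hxi (by rw [← hBi, ← h, hAi])
      have hAC : A ≠ C := fun h => hxj (by rw [← hAj, h, hCj])
      have hBC : B ≠ C := fun h => hxi (by rw [← hBi, h, hCi])
      have hRx : R x = 1 := by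
        simp [hRdef, indic, hxA, hxB, hxC]
      have hRA : R A = -1 := by
        simp [hRdef, indic, Ne.symm hxA, hAB, hAC]
      have hRB : R B = -1 := by
        simp [hRdef, indic, Ne.symm hxB, Ne.symm hAB, hBC]
      have hRC : R C = 1 := by
        simp [hRdef, indic, Ne.symm hxC, Ne.symm hAC, Ne.symm hBC]
      set G : (Fin d → Fin n) → ℤ := fun y => F y - F x * R y with hGdef
      have hGlayer : ∀ (l : Fin d) (m' : Fin n),
          ∑ y ∈ Finset.univ.filter (fun y : Fin d → Fin n => y l = m'), G y = 0 := by
        intro l m'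
        rw [hGdef]
        rw [Finset.sum_sub_distrib, ← Finset.mul_sum, hF l m', simple_layer hR l m',
          mul_zero, sub_zero]
      -- ksupp values
      obtain ⟨κ, hκeq⟩ : ∃ κ, ksupp z0 x = κ + 2 := ⟨ksupp z0 x - 2, by omega⟩
      have hkA : ksupp z0 A = κ + 1 := by
        rw [ksupp, hA, filter_update, Finset.card_erase_of_mem hi]
        have : (Finset.univ.filter fun l => x l ≠ z0).card = κ + 2 := hκeq
        omega
      have hkB : ksupp z0 B = κ + 1 := by
        rw [ksupp, hB, filter_update, Finset.card_erase_of_mem hj]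
        have : (Finset.univ.filter fun l => x l ≠ z0).card = κ + 2 := hκeq
        omega
      have hkC : ksupp z0 C = κ := by
        rw [ksupp, hC, filter_update, hA, filter_update]
        rw [Finset.card_erase_of_mem (Finset.mem_erase.mpr ⟨Ne.symm hij, hj⟩)]
        rw [Finset.card_erase_of_mem hi]
        have : (Finset.univ.filter fun l => x l ≠ z0).card = κ + 2 := hκeq
        omega
      -- G values
      have hGx : G x = 0 := by rw [hGdef]; simp [hRx]
      have hGA : G A = F A + F x := by rw [hGdef]; simp [hRA]
      have hGB : G B = F B + F x := by rw [hGdef]; simp [hRB]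
      have hGC : G C = F C - F x := by rw [hGdef]; simp [hRC]
      -- mu decreases
      have hmuG : mu z0 G < mu z0 F := by
        classical
        set s : Finset (Fin d → Fin n) := {x, A, B, C} with hs
        have hsplit : ∀ H : (Fin d → Fin n) → ℤ,
            mu z0 H = (∑ y ∈ Finset.univ \ s, (H y).natAbs * 4 ^ ksupp z0 y)
              + ∑ y ∈ s, (H y).natAbs * 4 ^ ksupp z0 y := by
          intro H
          rw [mu, ← Finset.sum_sdiff (Finset.subset_univ s)]
        have hout : ∀ y ∈ Finset.univ \ s,
            (G y).natAbs * 4 ^ ksupp z0 y = (F y).natAbs * 4 ^ ksupp z0 y := by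
          intro y hy
          have h1 : ¬(y = x ∨ y = A ∨ y = B ∨ y = C) := by
            simpa [hs] using (Finset.mem_sdiff.mp hy).2
          push_neg at h1
          have hRy : R y = 0 := by
            simp [hRdef, indic, h1.1, h1.2.1, h1.2.2.1, h1.2.2.2]
          rw [hGdef]; simp [hRy]
        rw [hsplit F, hsplit G, Finset.sum_congr rfl hout]
        apply Nat.add_lt_add_left
        have e1 : s = insert x (insert A (insert B ({C} : Finset (Fin d → Fin n)))) := rfl
        rw [e1, Finset.sum_insert (by simp [hxA, hxB, hxC]),
          Finset.sum_insert (by simp [hAB, hAC]),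
          Finset.sum_insert (by simp [hBC]), Finset.sum_singleton,
          Finset.sum_insert (by simp [hxA, hxB, hxC]),
          Finset.sum_insert (by simp [hAB, hAC]),
          Finset.sum_insert (by simp [hBC]), Finset.sum_singleton]
        rw [hGx, hGA, hGB, hGC, hkA, hkB, hkC, hκeq]
        have t1 : (F A + F x).natAbs ≤ (F A).natAbs + (F x).natAbs := Int.natAbs_add_le _ _
        have t2 : (F B + F x).natAbs ≤ (F B).natAbs + (F x).natAbs := Int.natAbs_add_le _ _
        have t3 : (F C - F x).natAbs ≤ (F C).natAbs + (F x).natAbs := Int.natAbs_sub_le _ _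
        have hc1 : 1 ≤ (F x).natAbs := Int.natAbs_pos.mpr hFX
        have hp : (1 : ℕ) ≤ 4 ^ κ := Nat.one_le_two_pow.trans (Nat.pow_le_pow_left (by norm_num) κ)
        have p1 : (4 : ℕ) ^ (κ + 1) = 4 * 4 ^ κ := by ring
        have p2 : (4 : ℕ) ^ (κ + 2) = 16 * 4 ^ κ := by ring
        rw [p1, p2]
        have u1 : (F A + F x).natAbs * (4 * 4 ^ κ)
            ≤ ((F A).natAbs + (F x).natAbs) * (4 * 4 ^ κ) := Nat.mul_le_mul_right _ t1
        have u2 : (F B + F x).natAbs * (4 * 4 ^ κ)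
            ≤ ((F B).natAbs + (F x).natAbs) * (4 * 4 ^ κ) := Nat.mul_le_mul_right _ t2
        have u3 : (F C - F x).natAbs * 4 ^ κ
            ≤ ((F C).natAbs + (F x).natAbs) * 4 ^ κ := Nat.mul_le_mul_right _ t3
        have hpos : 1 * 1 ≤ (F x).natAbs * 4 ^ κ := Nat.mul_le_mul hc1 hp
        simp only [Int.natAbs_zero, Nat.zero_mul]
        nlinarith [u1, u2, u3, hpos]
      -- conclude
      have hGspan : Spanned G := ih G (by omega) hGlayer
      have hFdecomp : F = G + (F x) • R := by
        funext y
        simp [hGdef]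
      rw [hFdecomp]
      exact spanned_add hGspan (spanned_zsmul hR (F x))



end AnnihAux

/-- Every annihilation function of `[n]^d` (an integer-valued function whose sum over every
layer is zero) is a finite sum of simple annihilation functions. -/
theorem annihilation_eq_sum_simple {n d : ℕ} (hn : 0 < n) (hd : 2 ≤ d)
    (F : (Fin d → Fin n) → ℤ)
    (hF : ∀ (i : Fin d) (j : Fin n),
      ∑ x ∈ Finset.univ.filter (fun x : Fin d → Fin n => x i = j), F x = 0) :
    ∃ (k : ℕ) (s : Fin k → ((Fin d → Fin n) → ℤ)),
      (∀ t, IsSimpleAnnihilation (s t)) ∧ F = ∑ t, s t :=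
  AnnihAux.main ⟨0, hn⟩ (by omega) (AnnihAux.mu ⟨0, hn⟩ F) F le_rfl hF
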